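/- Let G be an infinite residually finite group with scale (Γ_n) and X = G_{(Γ_n)} the odometer. For each m, the set [[G]]_{m,R} of homeomorphisms of X which on each cylinder [a]_m (a ∈ G/Γ_m) act as right multiplication by some element of τ(G) has closure, in the topology of uniform convergence on Homeo(X), equal to the set [[X]]_{m,R} of homeomorphisms which on each cylinder [a]_m act as right multiplication by some element ξ_a ∈ X. -/

import Mathlib

open scoped Pointwise

noncomputable section
namespace OdoPaper


variable {G : Type*} [Group G]

/-- Each finite quotient carries the discrete topology. -/
instance quotTop (Γ : Subgroup G) : TopologicalSpace (G ⧸ Γ) := ⊥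
instance quotDisc (Γ : Subgroup G) : DiscreteTopology (G ⧸ Γ) := ⟨rfl⟩

/-- The natural projection between coset spaces of nested subgroups. -/
def projOfLE {H K : Subgroup G} (h : H ≤ K) : G ⧸ H → G ⧸ K :=
  Quotient.map' id fun a b hab => by
    rw [QuotientGroup.leftRel_apply] at hab ⊢
    exact h hab

/-- The odometer space for a (not necessarily normal) decreasing sequence of subgroups. -/
abbrev OdoSp (Γ : ℕ → Subgroup G) (hdec : ∀ n, Γ (n + 1) ≤ Γ n) : Type _ :=
  {x : ∀ n, G ⧸ Γ n // ∀ n, projOfLE (hdec n) (x (n + 1)) = x n}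

/-- The bonding homomorphisms for a decreasing sequence of normal subgroups. -/
def odoMap (Γ : ℕ → Subgroup G) [∀ n, (Γ n).Normal] (hdec : ∀ n, Γ (n + 1) ≤ Γ n) (n : ℕ) :
    G ⧸ Γ (n + 1) →* G ⧸ Γ n :=
  QuotientGroup.map _ _ (MonoidHom.id G) (hdec n)

/-- The odometer associated to a decreasing sequence of normal subgroups, as a subgroup of
the product of the finite quotients. -/
def Odo (Γ : ℕ → Subgroup G) [∀ n, (Γ n).Normal] (hdec : ∀ n, Γ (n + 1) ≤ Γ n) :
    Subgroup (∀ n, G ⧸ Γ n) where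
  carrier := {x | ∀ n, odoMap Γ hdec n (x (n + 1)) = x n}
  one_mem' := fun n => map_one _
  mul_mem' := fun {a b} ha hb n => by
    simp only [Pi.mul_apply, map_mul, ha n, hb n]
  inv_mem' := fun {a} ha n => by
    simp only [Pi.inv_apply, map_inv, ha n]

/-- The canonical homomorphism from `G` to its odometer. -/
def tau (Γ : ℕ → Subgroup G) [∀ n, (Γ n).Normal] (hdec : ∀ n, Γ (n + 1) ≤ Γ n) :
    G →* Odo Γ hdec where
  toFun g := ⟨fun n => QuotientGroup.mk g, fun n => rfl⟩
  map_one' := rfl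
  map_mul' g₁ g₂ := rfl

/-- Cylinder set of level `n` through the coset `a`. -/
def cyl (Γ : ℕ → Subgroup G) [∀ n, (Γ n).Normal] (hdec : ∀ n, Γ (n + 1) ≤ Γ n) (n : ℕ)
    (a : G ⧸ Γ n) : Set (Odo Γ hdec) :=
  {x | (x : ∀ k, G ⧸ Γ k) n = a}

/-- The metric on the odometer: `d(x,y) = 2^{-min{n : xₙ ≠ yₙ}}`. -/
def odoDist {Γ : ℕ → Subgroup G} [∀ n, (Γ n).Normal] {hdec : ∀ n, Γ (n + 1) ≤ Γ n}
    (x y : Odo Γ hdec) : ℝ :=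
  letI := Classical.dec (x = y)
  if x = y then 0
  else (1 / 2 : ℝ) ^ sInf {n : ℕ | (x : ∀ k, G ⧸ Γ k) n ≠ (y : ∀ k, G ⧸ Γ k) n}



/-- The group of self-homeomorphisms of a space, with `(f * g) x = f (g x)`. -/
instance homeoGroup (X : Type*) [TopologicalSpace X] : Group (X ≃ₜ X) where
  mul f g := g.trans f
  one := Homeomorph.refl X
  inv := Homeomorph.symm
  mul_assoc _ _ _ := Homeomorph.ext fun _ => rfl
  one_mul _ := Homeomorph.ext fun _ => rfl
  mul_one _ := Homeomorph.ext fun _ => rfl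
  inv_mul_cancel f := Homeomorph.ext fun x => f.symm_apply_apply x

theorem homeo_mul_apply {X : Type*} [TopologicalSpace X] (f g : X ≃ₜ X) (x : X) :
    (f * g) x = f (g x) := rfl

theorem homeo_inv_apply {X : Type*} [TopologicalSpace X] (f : X ≃ₜ X) (x : X) :
    f⁻¹ x = f.symm x := rfl

section Full

variable (X : Type*) [Group X] [TopologicalSpace X]

/-- Membership in the topological full group of the right translation action of `X`
on itself: on each piece of a finite clopen partition, `f` is a right translation. -/
def InFullR (f : X ≃ₜ X) : Prop :=
  ∃ ξ : X → X, IsLocallyConstant ξ ∧ (Set.range ξ).Finite ∧ ∀ x, f x = x * (ξ x)⁻¹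

/-- Membership in the topological full group of the left translation action. -/
def InFullL (f : X ≃ₜ X) : Prop :=
  ∃ ξ : X → X, IsLocallyConstant ξ ∧ (Set.range ξ).Finite ∧ ∀ x, f x = ξ x * x

/-- The topological full group `[[X]]_R` of the right translation action. -/
def TFGR : Subgroup (X ≃ₜ X) where
  carrier := {f | InFullR X f}
  one_mem' := ⟨fun _ => 1, IsLocallyConstant.const 1,
    (Set.finite_singleton 1).subset (Set.range_subset_iff.2 fun _ => rfl),
    fun x => by simp [homeo_mul_apply] <;> rfl⟩
  mul_mem' := by
    rintro f g ⟨ξf, hf1, hf2, hf3⟩ ⟨ξg, hg1, hg2, hg3⟩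
    refine ⟨fun x => ξf (g x) * ξg x,
      (hf1.comp_continuous g.continuous).mul hg1,
      (hf2.mul hg2).subset ?_, fun x => ?_⟩
    · rintro y ⟨x, rfl⟩
      exact Set.mul_mem_mul ⟨g x, rfl⟩ ⟨x, rfl⟩
    · show f (g x) = x * (ξf (g x) * ξg x)⁻¹
      rw [mul_inv_rev, ← mul_assoc, ← hg3 x, ← hf3 (g x)]
  inv_mem' := by
    rintro f ⟨ξ, h1, h2, h3⟩
    refine ⟨fun x => (ξ (f.symm x))⁻¹,
      (h1.comp_continuous f.symm.continuous).inv, (h2.inv).subset ?_, fun x => ?_⟩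
    · rintro y ⟨x, rfl⟩
      exact Set.inv_mem_inv.2 ⟨f.symm x, rfl⟩
    · have h := h3 (f.symm x)
      rw [f.apply_symm_apply] at h
      show f.symm x = x * ((ξ (f.symm x))⁻¹)⁻¹
      rw [inv_inv]
      exact (eq_mul_inv_iff_mul_eq.mp h).symm

/-- The topological full group `[[X]]_L` of the left translation action. -/
def TFGL : Subgroup (X ≃ₜ X) where
  carrier := {f | InFullL X f}
  one_mem' := ⟨fun _ => 1, IsLocallyConstant.const 1,
    (Set.finite_singleton 1).subset (Set.range_subset_iff.2 fun _ => rfl),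
    fun x => by simp <;> rfl⟩
  mul_mem' := by
    rintro f g ⟨ξf, hf1, hf2, hf3⟩ ⟨ξg, hg1, hg2, hg3⟩
    refine ⟨fun x => ξf (g x) * ξg x,
      (hf1.comp_continuous g.continuous).mul hg1,
      (hf2.mul hg2).subset ?_, fun x => ?_⟩
    · rintro y ⟨x, rfl⟩
      exact Set.mul_mem_mul ⟨g x, rfl⟩ ⟨x, rfl⟩
    · show f (g x) = ξf (g x) * ξg x * x
      rw [mul_assoc, ← hg3 x, ← hf3 (g x)]
  inv_mem' := by
    rintro f ⟨ξ, h1, h2, h3⟩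
    refine ⟨fun x => (ξ (f.symm x))⁻¹,
      (h1.comp_continuous f.symm.continuous).inv, (h2.inv).subset ?_, fun x => ?_⟩
    · rintro y ⟨x, rfl⟩
      exact Set.inv_mem_inv.2 ⟨f.symm x, rfl⟩
    · have h := h3 (f.symm x)
      rw [f.apply_symm_apply] at h
      show f.symm x = (ξ (f.symm x))⁻¹ * x
      exact eq_inv_mul_iff_mul_eq.mpr h.symm

/-- `f` commutes with left translation by every element of `S`. -/
def IsAutLOn (S : Set X) (f : X ≃ₜ X) : Prop :=
  ∀ s ∈ S, ∀ x, f (s * x) = s * f x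

theorem IsAutLOn.one (S : Set X) : IsAutLOn X S 1 := fun _ _ _ => rfl

theorem IsAutLOn.mul {S T : Set X} {f g : X ≃ₜ X} (hf : IsAutLOn X S f)
    (hg : IsAutLOn X T g) : IsAutLOn X (S ∩ T) (f * g) := fun s hs x => by
  rw [homeo_mul_apply, hg s hs.2, hf s hs.1, homeo_mul_apply]

theorem IsAutLOn.inv {S : Set X} {f : X ≃ₜ X} (hf : IsAutLOn X S f) :
    IsAutLOn X S f⁻¹ := fun s hs x => by
  rw [homeo_inv_apply]
  have h := hf s hs (f.symm x)
  rw [f.apply_symm_apply] at h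
  rw [← h, f.symm_apply_apply]
  rfl

/-- The group of automorphisms of the left translation action of `S ⊆ X` on `X`. -/
def AutLgrp (S : Set X) : Subgroup (X ≃ₜ X) where
  carrier := {f | IsAutLOn X S f}
  one_mem' := IsAutLOn.one X S
  mul_mem' := fun {f g} hf hg => by
    have := IsAutLOn.mul X (S := S) (T := S) hf hg
    simpa using this
  inv_mem' := fun {f} hf => IsAutLOn.inv X hf

end Full



section Stab
variable (X : Type*) [Group X] [TopologicalSpace X]

/-- A (finitely additive) invariant mean: the classical definition of amenability for
(discrete) groups. -/
def IsAmenable (Γ : Type*) [Group Γ] : Prop :=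
  ∃ m : Set Γ → ℝ, (∀ A, 0 ≤ m A) ∧ m Set.univ = 1 ∧
    (∀ A B, Disjoint A B → m (A ∪ B) = m A + m B) ∧
    ∀ (g : Γ) (A), m ((g * ·) '' A) = m A

/-- `C` is a minimal component for the left translation action of the subset `T ⊆ X`. -/
def IsMinCompL (T : Set X) (C : Set X) : Prop :=
  C.Nonempty ∧ IsClosed C ∧ (∀ t ∈ T, ∀ x ∈ C, t * x ∈ C) ∧
    ∀ x ∈ C, C ⊆ closure ((· * x) '' T)

/-- The subgroup `[[X]]_{U,L}` of homeomorphisms acting as a left translation on each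
left coset of `U`. -/
def fullUL (U : Subgroup X) : Subgroup (X ≃ₜ X) where
  carrier := {f | ∀ a : X, ∃ ξ : X, ∀ x : X,
    (QuotientGroup.mk x : X ⧸ U) = QuotientGroup.mk a → f x = ξ * x}
  one_mem' := fun a => ⟨1, fun x _ => (one_mul x).symm⟩
  mul_mem' := by
    intro f g hf hg a
    obtain ⟨ξg, hξg⟩ := hg a
    obtain ⟨ξf, hξf⟩ := hf (ξg * a)
    refine ⟨ξf * ξg, fun x hx => ?_⟩
    have hx' : (QuotientGroup.mk (ξg * x) : X ⧸ U) = QuotientGroup.mk (ξg * a) := by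
      rw [QuotientGroup.eq] at hx ⊢
      simpa [mul_assoc] using hx
    show f (g x) = ξf * ξg * x
    rw [hξg x hx, hξf (ξg * x) hx', mul_assoc]
  inv_mem' := by
    intro f hf a
    obtain ⟨ξ, hξ⟩ := hf (f.symm a)
    refine ⟨ξ⁻¹, fun x hx => ?_⟩
    have ha : f (f.symm a) = ξ * f.symm a := hξ _ rfl
    rw [f.apply_symm_apply] at ha
    have hx' : (QuotientGroup.mk (ξ⁻¹ * x) : X ⧸ U) = QuotientGroup.mk (f.symm a) := by
      rw [QuotientGroup.eq] at hx ⊢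
      have : f.symm a = ξ⁻¹ * a := eq_inv_mul_iff_mul_eq.mpr ha.symm
      rw [this]
      simpa [mul_assoc] using hx
    have := hξ (ξ⁻¹ * x) hx'
    rw [mul_inv_cancel_left] at this
    show f.symm x = ξ⁻¹ * x
    conv_lhs => rw [← this]
    rw [f.symm_apply_apply]
end Stab

section Full0
variable (X : Type*) [Group X] [TopologicalSpace X]

/-- The subgroup `[[X]]⁰_{U,L}` of elements of the topological full group preserving each
left coset `aU` and acting on it by left multiplication by an element of `aUa⁻¹`. -/
def full0L (U : Subgroup X) : Subgroup (X ≃ₜ X) where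
  carrier := {f | ∀ a : X, ∃ u ∈ U, ∀ x : X,
    (QuotientGroup.mk x : X ⧸ U) = QuotientGroup.mk a → f x = a * u * a⁻¹ * x}
  one_mem' := fun a => ⟨1, U.one_mem, fun x _ => by
    show x = a * 1 * a⁻¹ * x
    simp⟩
  mul_mem' := by
    intro f g hf hg a
    obtain ⟨ug, hugU, hg'⟩ := hg a
    obtain ⟨uf, hufU, hf'⟩ := hf a
    refine ⟨uf * ug, U.mul_mem hufU hugU, fun x hx => ?_⟩
    have hgx : (QuotientGroup.mk (g x) : X ⧸ U) = QuotientGroup.mk a := by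
      rw [hg' x hx]
      rw [QuotientGroup.eq] at hx ⊢
      have h : (a * ug * a⁻¹ * x)⁻¹ * a = x⁻¹ * a * ug⁻¹ := by group
      rw [h]
      exact U.mul_mem hx (U.inv_mem hugU)
    show f (g x) = a * (uf * ug) * a⁻¹ * x
    rw [hf' (g x) hgx, hg' x hx]
    group
  inv_mem' := by
    intro f hf a
    obtain ⟨u, huU, hu⟩ := hf a
    refine ⟨u⁻¹, U.inv_mem huU, fun x hx => ?_⟩
    have hx' : (QuotientGroup.mk (a * u⁻¹ * a⁻¹ * x) : X ⧸ U) = QuotientGroup.mk a := by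
      rw [QuotientGroup.eq] at hx ⊢
      have h : (a * u⁻¹ * a⁻¹ * x)⁻¹ * a = x⁻¹ * a * u := by group
      rw [h]
      exact U.mul_mem hx huU
    have h2 := hu _ hx'
    have h3 : f (a * u⁻¹ * a⁻¹ * x) = x := by rw [h2]; group
    show f.symm x = a * u⁻¹ * a⁻¹ * x
    conv_lhs => rw [← h3]
    rw [f.symm_apply_apply]

end Full0

section StabAut
variable {G : Type*} [Group G]

/-- The stabilized automorphism group of the (left) odometer: homeomorphisms commuting
with the left translation action of some finite-index subgroup of `G`. -/
def stabAut (Γ : ℕ → Subgroup G) [∀ n, (Γ n).Normal] (hdec : ∀ n, Γ (n + 1) ≤ Γ n) :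
    Subgroup (↥(Odo Γ hdec) ≃ₜ ↥(Odo Γ hdec)) where
  carrier := {f | ∃ H : Subgroup G, H.FiniteIndex ∧
    IsAutLOn _ (tau Γ hdec '' (H : Set G)) f}
  one_mem' := ⟨⊤, inferInstance, IsAutLOn.one _ _⟩
  mul_mem' := by
    rintro f g ⟨H₁, h₁, hf⟩ ⟨H₂, h₂, hg⟩
    haveI := h₁; haveI := h₂
    refine ⟨H₁ ⊓ H₂, inferInstance, ?_⟩
    rintro s ⟨γ, hγ, rfl⟩ x
    have hγ' := Subgroup.mem_inf.mp hγ
    rw [homeo_mul_apply, hg _ ⟨γ, hγ'.2, rfl⟩, hf _ ⟨γ, hγ'.1, rfl⟩, homeo_mul_apply]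
  inv_mem' := by
    rintro f ⟨H, h, hf⟩
    exact ⟨H, h, IsAutLOn.inv _ hf⟩

/-- The clopen subgroup `[1]_n` of the odometer (kernel of the projection to level `n`). -/
def levelKer (Γ : ℕ → Subgroup G) [∀ n, (Γ n).Normal] (hdec : ∀ n, Γ (n + 1) ≤ Γ n)
    (n : ℕ) : Subgroup ↥(Odo Γ hdec) :=
  ((Pi.evalMonoidHom (fun k => G ⧸ Γ k) n).comp (Odo Γ hdec).subtype).ker

end StabAut

section Adic

/-- The subgroups `m^n ℤ` of `ℤ`, multiplicatively. -/
def zmSub (m : ℕ) (n : ℕ) : Subgroup (Multiplicative ℤ) :=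
  Subgroup.closure {Multiplicative.ofAdd ((m : ℤ) ^ n)}

theorem zmdec (m : ℕ) : ∀ n, zmSub m (n + 1) ≤ zmSub m n := fun n => by
  rw [zmSub, Subgroup.closure_le]
  intro y hy
  rw [Set.mem_singleton_iff] at hy
  subst hy
  rw [SetLike.mem_coe, zmSub, Subgroup.mem_closure_singleton]
  refine ⟨(m : ℤ), ?_⟩
  rw [← ofAdd_zsmul]
  congr 1
  rw [smul_eq_mul, pow_succ]
  ring

/-- The `m`-adic odometer group `ℤ_m`, the inverse limit of `ℤ/m^nℤ`. -/
def Zm (m : ℕ) : Subgroup (∀ n, Multiplicative ℤ ⧸ zmSub m n) := Odo (zmSub m) (zmdec m)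

/-- The scale of `ℤ²` generated by `(p^n, 0)` and `(0, q^n)`, multiplicatively. -/
def zsqSub (p q : ℕ) (n : ℕ) : Subgroup (Multiplicative (ℤ × ℤ)) :=
  Subgroup.closure {Multiplicative.ofAdd ((((p : ℤ) ^ n, 0) : ℤ × ℤ)),
    Multiplicative.ofAdd ((((0 : ℤ), (q : ℤ) ^ n) : ℤ × ℤ))}

theorem zsqdec (p q : ℕ) : ∀ n, zsqSub p q (n + 1) ≤ zsqSub p q n := fun n => by
  rw [zsqSub, Subgroup.closure_le]
  intro y hy
  rw [Set.mem_insert_iff, Set.mem_singleton_iff] at hy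
  rcases hy with rfl | rfl
  · rw [SetLike.mem_coe]
    have h : (Multiplicative.ofAdd ((((p : ℤ) ^ n, 0) : ℤ × ℤ))) ^ ((p : ℕ) : ℤ) =
        Multiplicative.ofAdd ((((p : ℤ) ^ (n + 1), 0) : ℤ × ℤ)) := by
      rw [← ofAdd_zsmul]
      congr 1
      rw [Prod.smul_mk, smul_eq_mul, smul_eq_mul, pow_succ]
      simp [Prod.ext_iff]; ring
    rw [← h]
    exact Subgroup.zpow_mem _ (Subgroup.subset_closure (by simp [zsqSub])) _
  · rw [SetLike.mem_coe]
    have h : (Multiplicative.ofAdd ((((0 : ℤ), (q : ℤ) ^ n) : ℤ × ℤ))) ^ ((q : ℕ) : ℤ) =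
        Multiplicative.ofAdd ((((0 : ℤ), (q : ℤ) ^ (n + 1)) : ℤ × ℤ)) := by
      rw [← ofAdd_zsmul]
      congr 1
      rw [Prod.smul_mk, smul_eq_mul, smul_eq_mul, pow_succ]
      simp [Prod.ext_iff]; ring
    rw [← h]
    exact Subgroup.zpow_mem _ (Subgroup.subset_closure (by simp [zsqSub])) _

end Adic

/-- `C` is a minimal component of the action of the subgroup `H ≤ G` on `X` via `ρ`. -/
def IsMinCompAct {G X : Type*} [Group G] [TopologicalSpace X] (ρ : G →* (X ≃ₜ X))
    (H : Subgroup G) (C : Set X) : Prop :=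
  C.Nonempty ∧ IsClosed C ∧ (∀ h ∈ H, ∀ x ∈ C, ρ h x ∈ C) ∧
    ∀ x ∈ C, C ⊆ closure {y | ∃ h ∈ H, y = ρ h x}



section Aux6

variable {G : Type*} [Group G] (Γ : ℕ → Subgroup G) [∀ n, (Γ n).Normal]
  (hdec : ∀ n, Γ (n + 1) ≤ Γ n)

instance quotTopGroup (n : ℕ) : IsTopologicalGroup (G ⧸ Γ n) where
  continuous_mul := continuous_of_discreteTopology
  continuous_inv := continuous_of_discreteTopology

theorem odo_coe_mul (x y : ↥(Odo Γ hdec)) (n : ℕ) :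
    ((x * y : ↥(Odo Γ hdec)) : ∀ k, G ⧸ Γ k) n
      = (x : ∀ k, G ⧸ Γ k) n * (y : ∀ k, G ⧸ Γ k) n := rfl

theorem odo_coe_inv (x : ↥(Odo Γ hdec)) (n : ℕ) :
    ((x⁻¹ : ↥(Odo Γ hdec)) : ∀ k, G ⧸ Γ k) n = ((x : ∀ k, G ⧸ Γ k) n)⁻¹ := rfl

theorem coord_one_down (x : ↥(Odo Γ hdec)) :
    ∀ N : ℕ, (x : ∀ k, G ⧸ Γ k) N = 1 → ∀ k, k ≤ N → (x : ∀ k, G ⧸ Γ k) k = 1 := by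
  intro N
  induction N with
  | zero =>
    intro h k hk
    rw [Nat.le_zero.mp hk]; exact h
  | succ N ih =>
    intro h k hk
    rcases Nat.lt_succ_iff_lt_or_eq.mp (Nat.lt_succ_of_le hk) with hk' | hk'
    · have hN : (x : ∀ k, G ⧸ Γ k) N = 1 := by
        have h2 := x.2 N
        rw [← h2, h]
        exact map_one _
      exact ih hN k (Nat.lt_succ_iff.mp hk')
    · rw [hk']; exact h

theorem coord_agree_down (x y : ↥(Odo Γ hdec)) (N : ℕ)
    (h : (x : ∀ k, G ⧸ Γ k) N = (y : ∀ k, G ⧸ Γ k) N) :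
    ∀ k, k ≤ N → (x : ∀ k, G ⧸ Γ k) k = (y : ∀ k, G ⧸ Γ k) k := by
  intro k hk
  have h1 : ((x * y⁻¹ : ↥(Odo Γ hdec)) : ∀ k, G ⧸ Γ k) N = 1 := by
    rw [odo_coe_mul, odo_coe_inv, h, mul_inv_cancel]
  have h2 := coord_one_down Γ hdec (x * y⁻¹) N h1 k hk
  rw [odo_coe_mul, odo_coe_inv] at h2
  exact mul_inv_eq_one.mp h2

theorem odoDist_eq_zero' {x y : ↥(Odo Γ hdec)} (h : x = y) : odoDist x y = 0 := by
  simp [odoDist, h]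

theorem odoDist_eq' {x y : ↥(Odo Γ hdec)} (h : x ≠ y) :
    odoDist x y
      = (1 / 2 : ℝ) ^ sInf {n : ℕ | (x : ∀ k, G ⧸ Γ k) n ≠ (y : ∀ k, G ⧸ Γ k) n} := by
  simp [odoDist, h]

theorem diffSet_nonempty {x y : ↥(Odo Γ hdec)} (h : x ≠ y) :
    {n : ℕ | (x : ∀ k, G ⧸ Γ k) n ≠ (y : ∀ k, G ⧸ Γ k) n}.Nonempty := by
  by_contra hc
  rw [Set.not_nonempty_iff_eq_empty, Set.eq_empty_iff_forall_notMem] at hc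
  apply h
  apply Subtype.ext
  funext n
  have := hc n
  simpa using this

theorem odoDist_le_of_agree (x y : ↥(Odo Γ hdec)) (N : ℕ)
    (h : ∀ k, k ≤ N → (x : ∀ k, G ⧸ Γ k) k = (y : ∀ k, G ⧸ Γ k) k) :
    odoDist x y ≤ (1 / 2 : ℝ) ^ (N + 1) := by
  by_cases hxy : x = y
  · rw [odoDist_eq_zero' Γ hdec hxy]
    positivity
  · rw [odoDist_eq' Γ hdec hxy]
    apply pow_le_pow_of_le_one (by norm_num) (by norm_num)
    by_contra hle
    push_neg at hle
    have hmem := Nat.sInf_mem (diffSet_nonempty Γ hdec hxy)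
    exact hmem (h _ (Nat.lt_succ_iff.mp hle))

theorem coord_eq_of_dist_le (x y : ↥(Odo Γ hdec)) (N : ℕ)
    (h : odoDist x y ≤ (1 / 2 : ℝ) ^ (N + 1)) :
    (x : ∀ k, G ⧸ Γ k) N = (y : ∀ k, G ⧸ Γ k) N := by
  by_cases hxy : x = y
  · rw [hxy]
  · rw [odoDist_eq' Γ hdec hxy] at h
    set S := {n : ℕ | (x : ∀ k, G ⧸ Γ k) n ≠ (y : ∀ k, G ⧸ Γ k) n}
    have hs : N + 1 ≤ sInf S := by
      by_contra hc
      push_neg at hc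
      have := pow_lt_pow_right_of_lt_one₀ (show (0:ℝ) < 1/2 by norm_num)
        (by norm_num) hc
      linarith
    have : N ∉ S := Nat.notMem_of_lt_sInf (Nat.lt_of_succ_le hs)
    simpa [S] using this

end Aux6

/-- the uniform closure of `[[G]]_{m,R}` equals `[[X]]_{m,R}`. -/
theorem stmt6 {G : Type*} [Group G] (Γ : ℕ → Subgroup G) [∀ n, (Γ n).Normal]
    [∀ n, (Γ n).FiniteIndex] (hdec : ∀ n, Γ (n + 1) ≤ Γ n)
    (htriv : ∀ g : G, (∀ n, g ∈ Γ n) → g = 1) [Infinite G] (m : ℕ) :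
    ∀ f : ↥(Odo Γ hdec) ≃ₜ ↥(Odo Γ hdec),
      ((∀ a : G ⧸ Γ m, ∃ ξ : ↥(Odo Γ hdec),
          ∀ x : ↥(Odo Γ hdec), (x : ∀ k, G ⧸ Γ k) m = a → f x = x * ξ⁻¹) ↔
        ∀ ε : ℝ, 0 < ε → ∃ g : ↥(Odo Γ hdec) ≃ₜ ↥(Odo Γ hdec),
          (∀ a : G ⧸ Γ m, ∃ γ : G, ∀ x : ↥(Odo Γ hdec), (x : ∀ k, G ⧸ Γ k) m = a →
            g x = x * (tau Γ hdec γ)⁻¹) ∧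
          ∀ x, odoDist (g x) (f x) ≤ ε) := by
  classical
  intro f
  constructor
  · -- forward: full group element is approximable
    intro h ε hε
    choose ξ hξ using h
    obtain ⟨n₀, hn₀⟩ := exists_pow_lt_of_lt_one hε (show (1 : ℝ) / 2 < 1 by norm_num)
    set N := max m n₀ with hNdef
    have hmN : m ≤ N := le_max_left m n₀
    -- choose group representatives of the ξ's at level N
    have hγex : ∀ a : G ⧸ Γ m, ∃ γ : G,
        (QuotientGroup.mk γ : G ⧸ Γ N) = (ξ a : ∀ k, G ⧸ Γ k) N :=
      fun a => QuotientGroup.mk_surjective _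
    choose γ hγ using hγex
    -- the induced permutation of level-m cylinders
    set σ : G ⧸ Γ m → G ⧸ Γ m := fun a => a * ((ξ a : ∀ k, G ⧸ Γ k) m)⁻¹ with hσdef
    have hfσ : ∀ x : ↥(Odo Γ hdec),
        (f x : ∀ k, G ⧸ Γ k) m = σ ((x : ∀ k, G ⧸ Γ k) m) := by
      intro x
      rw [hξ _ x rfl, odo_coe_mul, odo_coe_inv]
    have hσsurj : Function.Surjective σ := by
      intro b
      obtain ⟨g0, hg0⟩ := QuotientGroup.mk_surjective (s := Γ m) b
      set p : ↥(Odo Γ hdec) := tau Γ hdec g0 with hpdef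
      refine ⟨(f.symm p : ∀ k, G ⧸ Γ k) m, ?_⟩
      have hps := hfσ (f.symm p)
      rw [f.apply_symm_apply] at hps
      rw [← hps]
      exact hg0
    have hσinj : Function.Injective σ := Finite.injective_iff_surjective.mpr hσsurj
    -- the correcting locally constant function δ
    set δ : G ⧸ Γ m → ↥(Odo Γ hdec) := fun b =>
      if hb : ∃ a, σ a = b then ξ hb.choose * (tau Γ hdec (γ hb.choose))⁻¹ else 1
      with hδdef
    have hδσ : ∀ a, δ (σ a) = ξ a * (tau Γ hdec (γ a))⁻¹ := by
      intro a
      have hex : ∃ a', σ a' = σ a := ⟨a, rfl⟩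
      have hch : hex.choose = a := hσinj hex.choose_spec
      simp only [hδdef, dif_pos hex, hch]
    have hδ1 : ∀ b, ∀ k, k ≤ N → ((δ b : ∀ k, G ⧸ Γ k)) k = 1 := by
      intro b k hk
      by_cases hex : ∃ a, σ a = b
      · simp only [hδdef, dif_pos hex]
        apply coord_one_down Γ hdec _ N _ k hk
        rw [odo_coe_mul, odo_coe_inv]
        have htau : ((tau Γ hdec (γ hex.choose) : ↥(Odo Γ hdec)) : ∀ k, G ⧸ Γ k) N
            = (ξ hex.choose : ∀ k, G ⧸ Γ k) N := hγ _
        rw [htau, mul_inv_cancel]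
      · simp only [hδdef, dif_neg hex]
        rfl
    have hδm : ∀ b, ((δ b : ∀ k, G ⧸ Γ k)) m = 1 := fun b => hδ1 b m hmN
    -- the correcting homeomorphism r
    have contδ : Continuous fun y : ↥(Odo Γ hdec) => δ ((y : ∀ k, G ⧸ Γ k) m) := by
      have hc : Continuous (δ ∘ fun y : ↥(Odo Γ hdec) => (y : ∀ k, G ⧸ Γ k) m) :=
        continuous_of_discreteTopology.comp ((continuous_apply m).comp continuous_subtype_val)
      exact hc
    let r : ↥(Odo Γ hdec) ≃ₜ ↥(Odo Γ hdec) :=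
      { toFun := fun y => y * δ ((y : ∀ k, G ⧸ Γ k) m)
        invFun := fun y => y * (δ ((y : ∀ k, G ⧸ Γ k) m))⁻¹
        left_inv := fun y => by
          have hco : ((y * δ ((y : ∀ k, G ⧸ Γ k) m) : ↥(Odo Γ hdec)) : ∀ k, G ⧸ Γ k) m
              = (y : ∀ k, G ⧸ Γ k) m := by
            rw [odo_coe_mul, hδm, mul_one]
          show (y * δ ((y : ∀ k, G ⧸ Γ k) m))
              * (δ (((y * δ ((y : ∀ k, G ⧸ Γ k) m) : ↥(Odo Γ hdec)) : ∀ k, G ⧸ Γ k) m))⁻¹ = y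
          rw [hco]
          exact mul_inv_cancel_right y _
        right_inv := fun y => by
          have hco : ((y * (δ ((y : ∀ k, G ⧸ Γ k) m))⁻¹ : ↥(Odo Γ hdec)) : ∀ k, G ⧸ Γ k) m
              = (y : ∀ k, G ⧸ Γ k) m := by
            rw [odo_coe_mul, odo_coe_inv, hδm, inv_one, mul_one]
          show (y * (δ ((y : ∀ k, G ⧸ Γ k) m))⁻¹)
              * δ (((y * (δ ((y : ∀ k, G ⧸ Γ k) m))⁻¹ : ↥(Odo Γ hdec)) : ∀ k, G ⧸ Γ k) m) = y
          rw [hco]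
          exact inv_mul_cancel_right y _
        continuous_toFun := continuous_id.mul contδ
        continuous_invFun := continuous_id.mul contδ.inv }
    refine ⟨f.trans r, ?_, ?_⟩
    · intro a
      refine ⟨γ a, fun x hx => ?_⟩
      have hb : (f x : ∀ k, G ⧸ Γ k) m = σ a := by rw [hfσ x, hx]
      show f x * δ ((f x : ∀ k, G ⧸ Γ k) m) = x * (tau Γ hdec (γ a))⁻¹
      rw [hb, hδσ a, hξ a x hx]
      group
    · intro x
      have hag : ∀ k, k ≤ N →
          ((f.trans r) x : ∀ k, G ⧸ Γ k) k = (f x : ∀ k, G ⧸ Γ k) k := by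
        intro k hk
        show ((f x * δ ((f x : ∀ k, G ⧸ Γ k) m) : ↥(Odo Γ hdec)) : ∀ k, G ⧸ Γ k) k
            = (f x : ∀ k, G ⧸ Γ k) k
        rw [odo_coe_mul, hδ1 _ k hk, mul_one]
      calc odoDist ((f.trans r) x) (f x) ≤ (1 / 2 : ℝ) ^ (N + 1) :=
            odoDist_le_of_agree Γ hdec _ _ N hag
        _ ≤ (1 / 2 : ℝ) ^ n₀ :=
            pow_le_pow_of_le_one (by norm_num) (by norm_num)
              (le_trans (le_max_right m n₀) (Nat.le_succ N))
        _ ≤ ε := hn₀.le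
  · -- reverse: a uniform limit of translations is a translation on each cylinder
    intro h a
    obtain ⟨g0, hg0⟩ := QuotientGroup.mk_surjective (s := Γ m) a
    set p : ↥(Odo Γ hdec) := tau Γ hdec g0 with hpdef
    have hpm : (p : ∀ k, G ⧸ Γ k) m = a := hg0
    refine ⟨(f p)⁻¹ * p, fun x hx => ?_⟩
    have key : (x⁻¹ * f x : ↥(Odo Γ hdec)) = p⁻¹ * f p := by
      apply Subtype.ext
      funext N
      obtain ⟨g, hg1, hg2⟩ := h ((1 / 2 : ℝ) ^ (N + 1)) (by positivity)
      obtain ⟨γ, hγ⟩ := hg1 a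
      have e1 : g x = x * (tau Γ hdec γ)⁻¹ := hγ x hx
      have e2 : g p = p * (tau Γ hdec γ)⁻¹ := hγ p hpm
      have c1 : (g x : ∀ k, G ⧸ Γ k) N = (f x : ∀ k, G ⧸ Γ k) N :=
        coord_eq_of_dist_le Γ hdec _ _ N (hg2 x)
      have c2 : (g p : ∀ k, G ⧸ Γ k) N = (f p : ∀ k, G ⧸ Γ k) N :=
        coord_eq_of_dist_le Γ hdec _ _ N (hg2 p)
      show ((x⁻¹ * f x : ↥(Odo Γ hdec)) : ∀ k, G ⧸ Γ k) N
          = ((p⁻¹ * f p : ↥(Odo Γ hdec)) : ∀ k, G ⧸ Γ k) N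
      rw [odo_coe_mul, odo_coe_mul, odo_coe_inv, odo_coe_inv, ← c1, ← c2, e1, e2,
        odo_coe_mul, odo_coe_mul, odo_coe_inv]
      group
    calc f x = x * (x⁻¹ * f x) := by group
      _ = x * (p⁻¹ * f p) := by rw [key]
      _ = x * ((f p)⁻¹ * p)⁻¹ := by rw [mul_inv_rev, inv_inv]

end OdoPaper
end
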